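/- Let r₁ : C₁ → B and r₂ : C₂ → B be surjective chain maps of finite-dimensional Hilbert cochain complexes and let C₁ ⊕_θ C₂ be defined by the matching condition cos(θ)·r₁ξ₁ = sin(θ)·r₂ξ₂. Then for all θ ∈ ℝ the sequence 0 → C_{1,r} ⊕ C_{2,r} →^{γ₁+γ₂} C₁ ⊕_θ C₂ →^{r_θ} B → 0 is exact, where C_{j,r} = ker r_j, γ_j are the natural inclusions, and r_θ(ξ₁, ξ₂) = sin(θ)·r₁ξ₁ + cos(θ)·r₂ξ₂. -/

import Mathlib

noncomputable section

section

variable (C₁ C₂ B : ℕ → Type)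
  [∀ j, NormedAddCommGroup (C₁ j)] [∀ j, InnerProductSpace ℂ (C₁ j)]
  [∀ j, FiniteDimensional ℂ (C₁ j)]
  [∀ j, NormedAddCommGroup (C₂ j)] [∀ j, InnerProductSpace ℂ (C₂ j)]
  [∀ j, FiniteDimensional ℂ (C₂ j)]
  [∀ j, NormedAddCommGroup (B j)] [∀ j, InnerProductSpace ℂ (B j)]
  [∀ j, FiniteDimensional ℂ (B j)]

/-- The orthogonal direct sum `C₁ ⊕ C₂` in degree `j`. -/
abbrev SumC (j : ℕ) : Type := WithLp 2 (C₁ j × C₂ j)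

variable (d₁ : ∀ j, C₁ j →ₗ[ℂ] C₁ (j + 1)) (d₂ : ∀ j, C₂ j →ₗ[ℂ] C₂ (j + 1))
variable (r₁ : ∀ j, C₁ j →ₗ[ℂ] B j) (r₂ : ∀ j, C₂ j →ₗ[ℂ] B j) (θ : ℝ)

/-- The differential `d¹ ⊕ d²`. -/
def sumD (j : ℕ) : SumC C₁ C₂ j →ₗ[ℂ] SumC C₁ C₂ (j + 1) :=
  (WithLp.linearEquiv 2 ℂ (C₁ (j + 1) × C₂ (j + 1))).symm.toLinearMap ∘ₗ
    LinearMap.prodMap (d₁ j) (d₂ j) ∘ₗ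
    (WithLp.linearEquiv 2 ℂ (C₁ j × C₂ j)).toLinearMap

/-- The constraint map whose kernel is `(C₁ ⊕_θ C₂)^j`,
`(ξ₁, ξ₂) ↦ cos θ · r₁ ξ₁ - sin θ · r₂ ξ₂`. -/
def constraintMap (j : ℕ) : SumC C₁ C₂ j →ₗ[ℂ] B j :=
  ((Real.cos θ : ℂ) • (r₁ j ∘ₗ LinearMap.fst ℂ (C₁ j) (C₂ j))
      - (Real.sin θ : ℂ) • (r₂ j ∘ₗ LinearMap.snd ℂ (C₁ j) (C₂ j))) ∘ₗ
    (WithLp.linearEquiv 2 ℂ (C₁ j × C₂ j)).toLinearMap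

/-- `(C₁ ⊕_θ C₂)^j = {(ξ₁,ξ₂) : cos θ · r₁ ξ₁ = sin θ · r₂ ξ₂}`. -/
def Dtheta (j : ℕ) : Submodule ℂ (SumC C₁ C₂ j) :=
  LinearMap.ker (constraintMap C₁ C₂ B r₁ r₂ θ j)

/-- `γ₁ + γ₂ : ker r₁ ⊕ ker r₂ → C₁ ⊕_θ C₂`, the natural inclusion. -/
def gammaTheta (j : ℕ) :
    WithLp 2 (↥(LinearMap.ker (r₁ j)) × ↥(LinearMap.ker (r₂ j))) →ₗ[ℂ]
      ↥(Dtheta C₁ C₂ B r₁ r₂ θ j) :=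
  LinearMap.codRestrict (Dtheta C₁ C₂ B r₁ r₂ θ j)
    ((WithLp.linearEquiv 2 ℂ (C₁ j × C₂ j)).symm.toLinearMap ∘ₗ
      LinearMap.prodMap (LinearMap.ker (r₁ j)).subtype (LinearMap.ker (r₂ j)).subtype ∘ₗ
      (WithLp.linearEquiv 2 ℂ (↥(LinearMap.ker (r₁ j)) × ↥(LinearMap.ker (r₂ j)))).toLinearMap)
    (fun x => by
      have hx1 : r₁ j ((WithLp.equiv 2 _ x).1 : C₁ j) = 0 :=
        ((WithLp.equiv 2 (↥(LinearMap.ker (r₁ j)) × ↥(LinearMap.ker (r₂ j))) x).1).2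
      have hx2 : r₂ j ((WithLp.equiv 2 _ x).2 : C₂ j) = 0 :=
        ((WithLp.equiv 2 (↥(LinearMap.ker (r₁ j)) × ↥(LinearMap.ker (r₂ j))) x).2).2
      simp [Dtheta, constraintMap, LinearMap.mem_ker, hx1, hx2])

/-- `r_θ : C₁ ⊕_θ C₂ → B`, `(ξ₁, ξ₂) ↦ sin θ · r₁ ξ₁ + cos θ · r₂ ξ₂`. -/
def rTheta (j : ℕ) : ↥(Dtheta C₁ C₂ B r₁ r₂ θ j) →ₗ[ℂ] B j :=
  (((Real.sin θ : ℂ) • (r₁ j ∘ₗ LinearMap.fst ℂ (C₁ j) (C₂ j))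
      + (Real.cos θ : ℂ) • (r₂ j ∘ₗ LinearMap.snd ℂ (C₁ j) (C₂ j))) ∘ₗ
    (WithLp.linearEquiv 2 ℂ (C₁ j × C₂ j)).toLinearMap) ∘ₗ
    (Dtheta C₁ C₂ B r₁ r₂ θ j).subtype

end

/-- for surjective chain maps `r₁ : C₁ → B`, `r₂ : C₂ → B` of
finite-dimensional Hilbert cochain complexes and every `θ ∈ ℝ`, the sequence
`0 → C_{1,r} ⊕ C_{2,r} →^{γ₁+γ₂} C₁ ⊕_θ C₂ →^{r_θ} B → 0` is exact in each degree. -/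
theorem gamma_rtheta_exact
    (C₁ C₂ B : ℕ → Type)
    [∀ j, NormedAddCommGroup (C₁ j)] [∀ j, InnerProductSpace ℂ (C₁ j)]
    [∀ j, FiniteDimensional ℂ (C₁ j)]
    [∀ j, NormedAddCommGroup (C₂ j)] [∀ j, InnerProductSpace ℂ (C₂ j)]
    [∀ j, FiniteDimensional ℂ (C₂ j)]
    [∀ j, NormedAddCommGroup (B j)] [∀ j, InnerProductSpace ℂ (B j)]
    [∀ j, FiniteDimensional ℂ (B j)]
    (d₁ : ∀ j, C₁ j →ₗ[ℂ] C₁ (j + 1)) (d₂ : ∀ j, C₂ j →ₗ[ℂ] C₂ (j + 1))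
    (dB : ∀ j, B j →ₗ[ℂ] B (j + 1))
    (hd₁ : ∀ j, d₁ (j + 1) ∘ₗ d₁ j = 0) (hd₂ : ∀ j, d₂ (j + 1) ∘ₗ d₂ j = 0)
    (hdB : ∀ j, dB (j + 1) ∘ₗ dB j = 0)
    (r₁ : ∀ j, C₁ j →ₗ[ℂ] B j) (r₂ : ∀ j, C₂ j →ₗ[ℂ] B j)
    (hr₁ : ∀ j, Function.Surjective (r₁ j)) (hr₂ : ∀ j, Function.Surjective (r₂ j))
    (hchain₁ : ∀ j, dB j ∘ₗ r₁ j = r₁ (j + 1) ∘ₗ d₁ j)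
    (hchain₂ : ∀ j, dB j ∘ₗ r₂ j = r₂ (j + 1) ∘ₗ d₂ j)
    (θ : ℝ) (j : ℕ) :
    Function.Injective (gammaTheta C₁ C₂ B r₁ r₂ θ j) ∧
      Function.Surjective (rTheta C₁ C₂ B r₁ r₂ θ j) ∧
      LinearMap.range (gammaTheta C₁ C₂ B r₁ r₂ θ j)
        = LinearMap.ker (rTheta C₁ C₂ B r₁ r₂ θ j) := by
  set c : ℂ := (Real.cos θ : ℂ) with hc
  set s : ℂ := (Real.sin θ : ℂ) with hs
  have hsc : s * s + c * c = 1 := by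
    rw [hc, hs]; norm_cast; nlinarith [Real.sin_sq_add_cos_sq θ]
  refine ⟨?_, ?_, ?_⟩
  · intro x y hxy
    have h := congrArg (fun z => ((z : ↥(Dtheta C₁ C₂ B r₁ r₂ θ j)) : SumC C₁ C₂ j)) hxy
    simp only [gammaTheta, LinearMap.codRestrict_apply, LinearMap.coe_comp,
      Function.comp_apply, LinearEquiv.coe_coe] at h
    have h2 := (WithLp.linearEquiv 2 ℂ (C₁ j × C₂ j)).symm.injective h
    apply (WithLp.linearEquiv 2 ℂ (↥(LinearMap.ker (r₁ j)) × ↥(LinearMap.ker (r₂ j)))).injective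
    have h3 : (LinearMap.prodMap (LinearMap.ker (r₁ j)).subtype (LinearMap.ker (r₂ j)).subtype)
        ((WithLp.linearEquiv 2 ℂ _) x) = (LinearMap.prodMap _ _) ((WithLp.linearEquiv 2 ℂ _) y) := h2
    simp only [LinearMap.prodMap_apply, Prod.mk.injEq] at h3
    exact Prod.ext (Subtype.ext h3.1) (Subtype.ext h3.2)
  · intro b
    obtain ⟨ξ₁, hξ₁⟩ := hr₁ j (s • b)
    obtain ⟨ξ₂, hξ₂⟩ := hr₂ j (c • b)
    have hmem : (WithLp.equiv 2 (C₁ j × C₂ j)).symm (ξ₁, ξ₂) ∈ Dtheta C₁ C₂ B r₁ r₂ θ j := by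
      simp [Dtheta, constraintMap, LinearMap.mem_ker, hξ₁, hξ₂, ← hc, ← hs]
      module
    refine ⟨⟨_, hmem⟩, ?_⟩
    simp [rTheta, hξ₁, hξ₂, ← hc, ← hs, smul_smul]
    rw [← add_smul, hsc, one_smul]
  · ext ⟨x, hx⟩
    simp only [LinearMap.mem_range, LinearMap.mem_ker]
    constructor
    · rintro ⟨z, hz⟩
      have hz' := congrArg (fun w => ((w : ↥(Dtheta C₁ C₂ B r₁ r₂ θ j)) : SumC C₁ C₂ j)) hz
      simp only [gammaTheta, LinearMap.codRestrict_apply, LinearMap.coe_comp,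
        Function.comp_apply, LinearEquiv.coe_coe] at hz'
      have e1 : r₁ j ((WithLp.equiv 2 (C₁ j × C₂ j)) x).1 = 0 := by
        rw [← hz']
        exact (((WithLp.equiv 2 _) z).1).2
      have e2 : r₂ j ((WithLp.equiv 2 (C₁ j × C₂ j)) x).2 = 0 := by
        rw [← hz']
        exact (((WithLp.equiv 2 _) z).2).2
      have e1' : r₁ j (WithLp.fst x) = 0 := e1
      have e2' : r₂ j (WithLp.snd x) = 0 := e2
      simp [rTheta, e1', e2', ← hc, ← hs]
    · intro h
      have hx' : c • r₁ j ((WithLp.equiv 2 (C₁ j × C₂ j)) x).1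
          - s • r₂ j ((WithLp.equiv 2 (C₁ j × C₂ j)) x).2 = 0 := by
        have := hx
        simpa [Dtheta, constraintMap, LinearMap.mem_ker, ← hc, ← hs] using this
      have h' : s • r₁ j ((WithLp.equiv 2 (C₁ j × C₂ j)) x).1
          + c • r₂ j ((WithLp.equiv 2 (C₁ j × C₂ j)) x).2 = 0 := by
        simpa [rTheta, ← hc, ← hs] using h
      set a := r₁ j ((WithLp.equiv 2 (C₁ j × C₂ j)) x).1 with ha
      set b := r₂ j ((WithLp.equiv 2 (C₁ j × C₂ j)) x).2 with hb
      have ea : a = 0 := by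
        have key : c • (c • a - s • b) + s • (s • a + c • b) = (s * s + c * c) • a := by
          module
        rw [hx', h', smul_zero, smul_zero, add_zero, hsc, one_smul] at key
        exact key.symm
      have eb : b = 0 := by
        have key : (-s) • (c • a - s • b) + c • (s • a + c • b) = (s * s + c * c) • b := by
          module
        rw [hx', h', smul_zero, smul_zero, add_zero, hsc, one_smul] at key
        exact key.symm
      refine ⟨(WithLp.equiv 2 _).symm (⟨_, ea⟩, ⟨_, eb⟩), ?_⟩
      apply Subtype.ext
      simp [gammaTheta]
      rfl


end
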